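/- Let β be a nonzero algebraic integer, K = ℚ(β), and 𝓞 the ring of integers of K. Then there exists h ∈ ℕ such that for every x ∈ ℤ[β,β⁻¹]: if there exists y ∈ ℤ[β] with y − x ∈ β^h·𝓞, then x ∈ ℤ[β]. -/

import Mathlib

set_option synthInstance.maxHeartbeats 1000000 in
set_option maxHeartbeats 1000000 in
/-- For a nonzero algebraic integer `β` generating the number field `K = ℚ(β)`,
there is `h ∈ ℕ` such that for every `x ∈ ℤ[β,β⁻¹]`: if some `y ∈ ℤ[β]` satisfies
`y − x ∈ β^h·𝓞` (where `𝓞` is the ring of integers of `K`, i.e. the integral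
closure of `ℤ` in `K`), then `x ∈ ℤ[β]`. -/
theorem mem_zbeta_of_close_to_zbeta (K : Type*) [Field K] [NumberField K]
    (β : K) (hβ0 : β ≠ 0) (hβint : IsIntegral ℤ β)
    (hgen : IntermediateField.adjoin ℚ ({β} : Set K) = ⊤) :
    ∃ h : ℕ, ∀ x ∈ Algebra.adjoin ℤ ({β, β⁻¹} : Set K),
      (∃ y ∈ Algebra.adjoin ℤ ({β} : Set K), ∃ z : K, IsIntegral ℤ z ∧ y - x = β ^ h * z) →
      x ∈ Algebra.adjoin ℤ ({β} : Set K) := by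
  classical
  set A := Algebra.adjoin ℤ ({β} : Set K) with hAdef
  have hβA : β ∈ A := Algebra.self_mem_adjoin_singleton ℤ β
  -- Step 1: K = ℚ[β] as an algebra.
  have hQtop : Algebra.adjoin ℚ ({β} : Set K) = ⊤ := by
    rw [← IntermediateField.adjoin_simple_toSubalgebra_of_isAlgebraic (hβint.tower_top (A := ℚ)).isAlgebraic,
      hgen]
    exact IntermediateField.top_toSubalgebra
  -- Step 2: every element of K has a nonzero integer multiple in A.
  have hdenom : ∀ v : K, ∃ cv : ℤ, cv ≠ 0 ∧ (cv : K) * v ∈ A := by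
    intro v
    have hv : v ∈ Algebra.adjoin ℚ ({β} : Set K) := by rw [hQtop]; trivial
    rw [Algebra.adjoin_singleton_eq_range_aeval, AlgHom.mem_range] at hv
    obtain ⟨p, hp⟩ := hv
    obtain ⟨b, hb⟩ := IsLocalization.integerNormalization_map_to_map (nonZeroDivisors ℤ) p
    refine ⟨(b : ℤ), nonZeroDivisors.coe_ne_zero b, ?_⟩
    have h1 : Polynomial.aeval β
        ((IsLocalization.integerNormalization (nonZeroDivisors ℤ) p).map (algebraMap ℤ ℚ))
        = ((b : ℤ) : K) * v := by
      rw [hb, map_zsmul, hp, zsmul_eq_mul]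
    rw [← h1, Polynomial.aeval_map_algebraMap]
    exact Polynomial.aeval_mem_adjoin_singleton ℤ β
  choose f hf0 hfA using hdenom
  -- Step 3: a uniform nonzero integer `c` with `c • 𝓞 ⊆ A`.
  obtain ⟨s, hs⟩ : (⊤ : Submodule ℤ (NumberField.RingOfIntegers K)).FG := Module.Finite.fg_top
  set c : ℤ := ∏ v ∈ s, f (algebraMap (NumberField.RingOfIntegers K) K v) with hcdef
  have hc0 : c ≠ 0 := Finset.prod_ne_zero_iff.mpr fun v _ => hf0 _
  have hcA : ∀ z : K, IsIntegral ℤ z → (c : K) * z ∈ A := by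
    intro z hz
    have hz' : (⟨z, hz⟩ : NumberField.RingOfIntegers K) ∈
        Submodule.span ℤ (s : Set (NumberField.RingOfIntegers K)) := by
      rw [hs]; trivial
    have key : ∀ w ∈ Submodule.span ℤ (s : Set (NumberField.RingOfIntegers K)),
        (c : K) * algebraMap (NumberField.RingOfIntegers K) K w ∈ A := by
      intro w hw
      induction hw using Submodule.span_induction with
      | mem v hv =>
        rw [hcdef, ← Finset.mul_prod_erase s _ hv, Int.cast_mul,
          mul_comm ((f (algebraMap (NumberField.RingOfIntegers K) K v) : ℤ) : K), mul_assoc]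
        exact mul_mem (Subalgebra.intCast_mem A _) (hfA _)
      | zero =>
        simp only [map_zero, mul_zero]
        exact zero_mem A
      | add u v hu hv ihu ihv =>
        rw [map_add, mul_add]; exact add_mem ihu ihv
      | smul a u hu ihu =>
        rw [map_zsmul, mul_smul_comm]
        exact Subalgebra.smul_mem A ihu a
    exact key _ hz'
  -- Step 4: pigeonhole — find n ≥ 1 with β^n ≡ β^(2n) mod c𝓞.
  set R := NumberField.RingOfIntegers K with hRdef
  set βR : R := ⟨β, hβint⟩ with hβRdef
  have hcR0 : (c : R) ≠ 0 := by
    intro h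
    apply hc0
    have := congrArg (algebraMap R K) h
    rw [map_intCast, map_zero] at this
    exact_mod_cast this
  haveI hfin : Finite (R ⧸ Ideal.span {(c : R)}) := by
    haveI := Ideal.finiteQuotientOfFreeOfNeBot (Ideal.span {(c : R)}) (by
      rw [Ne, Ideal.span_singleton_eq_bot]; exact hcR0)
    exact this
  obtain ⟨i, j, hij, hmap⟩ := Finite.exists_ne_map_eq_of_infinite
    (fun k : ℕ => Ideal.Quotient.mk (Ideal.span {(c : R)}) (βR ^ k))
  have hPab : ∃ a b : ℕ, a < b ∧ (βR ^ a - βR ^ b) ∈ Ideal.span {(c : R)} := by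
    rcases Nat.lt_or_gt_of_ne hij with h | h
    · exact ⟨i, j, h, Ideal.Quotient.eq.mp hmap⟩
    · exact ⟨j, i, h, Ideal.Quotient.eq.mp hmap.symm⟩
  obtain ⟨a, b, hab, hmem⟩ := hPab
  obtain ⟨δ0, hδ0⟩ := Ideal.mem_span_singleton'.mp hmem
  set p := b - a with hpdef
  have hp1 : 1 ≤ p := Nat.sub_pos_of_lt hab
  have hbap : a + p = b := by omega
  have hδ0' : βR ^ a - βR ^ a * βR ^ p = (c : R) * δ0 := by
    rw [← pow_add, hbap, mul_comm]; exact hδ0.symm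
  -- claim in R: for all k, βR^a − βR^a (βR^p)^k ∈ cR
  have claimR : ∀ k : ℕ, ∃ δ : R, βR ^ a - βR ^ a * (βR ^ p) ^ k = (c : R) * δ := by
    intro k
    induction k with
    | zero => exact ⟨0, by simp⟩
    | succ k ih =>
      obtain ⟨δ, hδ⟩ := ih
      exact ⟨δ0 * (βR ^ p) ^ k + δ, by linear_combination ((βR ^ p) ^ k) * hδ0' + hδ⟩
  -- take n := (a+1)*p ; then βR^n − βR^(2n) ∈ cR
  set n : ℕ := (a + 1) * p with hndef
  have hn1 : 1 ≤ n := by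
    calc 1 ≤ p := hp1
    _ ≤ (a+1) * p := Nat.le_mul_of_pos_left p (Nat.succ_pos a)
  have han : a ≤ n := by
    calc a ≤ a + 1 := Nat.le_succ a
    _ ≤ (a+1) * p := Nat.le_mul_of_pos_right _ hp1
  obtain ⟨t, htn⟩ : ∃ t, t + a = n := ⟨n - a, by omega⟩
  obtain ⟨δn, hδn⟩ : ∃ δ : R, βR ^ n - βR ^ (2 * n) = (c : R) * δ := by
    obtain ⟨δ, hδ⟩ := claimR (a + 1)
    refine ⟨βR ^ t * δ, ?_⟩
    have e1 : βR ^ n = βR ^ t * βR ^ a := by rw [← pow_add, htn]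
    have e2 : βR ^ (2 * n) = βR ^ t * (βR ^ a * (βR ^ p) ^ (a + 1)) := by
      rw [← pow_mul, ← pow_add, ← pow_add]
      congr 1
      rw [Nat.mul_comm p (a + 1), ← hndef]; omega
    rw [e1, e2]
    linear_combination (βR ^ t) * hδ
  -- push to K
  have hδnint : IsIntegral ℤ (algebraMap R K δn) := NumberField.RingOfIntegers.isIntegral_coe δn
  have hδnK : β ^ n - β ^ (2 * n) = (c : K) * algebraMap R K δn := by
    have := congrArg (algebraMap R K) hδn
    rw [map_sub, map_mul, map_pow, map_pow, map_intCast] at this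
    exact this
  set δK : K := algebraMap R K δn with hδKdef
  have hn2 : β ^ n - β ^ n * β ^ n = (c : K) * δK := by
    rw [← pow_add, ← two_mul]; exact hδnK
  -- claim in K: for all m, β^n − β^n (β^n)^m ∈ c𝓞, with integral witness
  have claimK : ∀ m : ℕ, ∃ δ : K, IsIntegral ℤ δ ∧
      β ^ n - β ^ n * (β ^ n) ^ m = (c : K) * δ := by
    intro m
    induction m with
    | zero => exact ⟨0, isIntegral_zero, by simp⟩
    | succ m ih =>
      obtain ⟨δ, hδint, hδ⟩ := ih
      refine ⟨δK * (β ^ n) ^ m + δ, ?_, ?_⟩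
      · exact (hδnint.mul ((hβint.pow n).pow m)).add hδint
      · linear_combination ((β ^ n) ^ m) * hn2 + hδ
  -- Step 5: elements of ℤ[β, β⁻¹] become elements of A after multiplying by a power of β.
  have hpowmem : ∀ x ∈ Algebra.adjoin ℤ ({β, β⁻¹} : Set K), ∃ m : ℕ, β ^ m * x ∈ A := by
    intro x hx
    induction hx using Algebra.adjoin_induction with
    | mem u hu =>
      simp only [Set.mem_insert_iff, Set.mem_singleton_iff] at hu
      rcases hu with rfl | rfl
      · exact ⟨0, by simpa using hβA⟩
      · refine ⟨1, ?_⟩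
        rw [pow_one, mul_inv_cancel₀ hβ0]
        exact one_mem A
    | algebraMap r => exact ⟨0, by simpa using Subalgebra.algebraMap_mem A r⟩
    | add u v hu hv ihu ihv =>
      obtain ⟨mu, hmu⟩ := ihu
      obtain ⟨mv, hmv⟩ := ihv
      refine ⟨mu + mv, ?_⟩
      have e : β ^ (mu + mv) * (u + v) = β ^ mv * (β ^ mu * u) + β ^ mu * (β ^ mv * v) := by
        ring
      rw [e]
      exact add_mem (mul_mem (pow_mem hβA mv) hmu) (mul_mem (pow_mem hβA mu) hmv)
    | mul u v hu hv ihu ihv =>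
      obtain ⟨mu, hmu⟩ := ihu
      obtain ⟨mv, hmv⟩ := ihv
      refine ⟨mu + mv, ?_⟩
      have e : β ^ (mu + mv) * (u * v) = (β ^ mu * u) * (β ^ mv * v) := by ring
      rw [e]
      exact mul_mem hmu hmv
  -- Step 6: the main argument with h := n.
  refine ⟨n, ?_⟩
  rintro x hx ⟨y, hy, z, hzint, hyz⟩
  have hwmem : y - x ∈ Algebra.adjoin ℤ ({β, β⁻¹} : Set K) := by
    refine sub_mem ?_ hx
    exact Algebra.adjoin_mono (by intro u hu; exact Set.mem_insert_iff.mpr (Or.inl hu)) hy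
  obtain ⟨m, hm⟩ := hpowmem _ hwmem
  obtain ⟨δm, hδmint, hδm⟩ := claimK m
  have hmn : m ≤ n * m := Nat.le_mul_of_pos_left m hn1
  obtain ⟨tm, htm⟩ : ∃ tm, tm + m = n * m := ⟨n * m - m, by omega⟩
  have key : y - x = β ^ tm * (β ^ m * (y - x)) + (c : K) * (δm * z) := by
    rw [hyz]
    have e : β ^ tm * (β ^ m * (β ^ n * z)) = (β ^ n) ^ m * (β ^ n * z) := by
      rw [← mul_assoc, ← pow_add, htm, pow_mul]
    rw [e]
    linear_combination z * hδm
  have hwA : y - x ∈ A := by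
    rw [key]
    exact add_mem (mul_mem (pow_mem hβA tm) hm) (hcA _ (hδmint.mul hzint))
  have : y - (y - x) ∈ A := sub_mem hy hwA
  simpa using this
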